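/- Chain criterion for weak conjugacy: let G be a topological group and f, g ∈ G. If there exist h_1, …, h_N ∈ G with h_1 = f and h_N = g such that the closures of the conjugacy classes of h_i and h_{i+1} intersect for each 1 ≤ i ≤ N−1 (i.e. closure(Conj(h_i)) ∩ closure(Conj(h_{i+1})) ≠ ∅, where Conj(h) = { k h k⁻¹ : k ∈ G }), then f and g are weakly conjugate. -/

import Mathlib

/-- Two elements of a topological group are weakly conjugate if they cannot be separated
by any continuous conjugation-invariant map into a Hausdorff topological space. -/
def WeaklyConjugate (G : Type) [Group G] [TopologicalSpace G] (f g : G) : Prop :=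
  ∀ (Y : Type) [TopologicalSpace Y] [T2Space Y] (θ : G → Y),
    Continuous θ → (∀ x h : G, θ (h * x * h⁻¹) = θ x) → θ f = θ g

/-- The conjugacy class of an element of a group. -/
def conjClass (G : Type) [Group G] (h : G) : Set G := {x : G | ∃ k : G, x = k * h * k⁻¹}

lemma closure_conj_eq {G : Type} [Group G] [TopologicalSpace G]
    {Y : Type} [TopologicalSpace Y] [T2Space Y] (θ : G → Y)
    (hc : Continuous θ) (hinv : ∀ x h : G, θ (h * x * h⁻¹) = θ x)
    (a : G) {y : G} (hy : y ∈ closure (conjClass G a)) : θ y = θ a := by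
  have hsub : conjClass G a ⊆ θ ⁻¹' {θ a} := by
    rintro x ⟨k, rfl⟩
    simp [hinv a k]
  have hclosed : IsClosed (θ ⁻¹' {θ a}) := (isClosed_singleton).preimage hc
  exact (hclosed.closure_subset_iff.mpr hsub) hy

/-- Chain criterion for weak conjugacy. -/
theorem stmt13 (G : Type) [Group G] [TopologicalSpace G] [IsTopologicalGroup G]
    (f g : G) (N : ℕ) (h : ℕ → G) (h0 : h 0 = f) (hN : h N = g)
    (hchain : ∀ i < N,
      (closure (conjClass G (h i)) ∩ closure (conjClass G (h (i + 1)))).Nonempty) :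
    WeaklyConjugate G f g := by
  intro Y _ _ θ hc hinv
  subst h0 hN
  have key : ∀ n ≤ N, θ (h 0) = θ (h n) := by
    intro n hn
    induction n with
    | zero => rfl
    | succ m ih =>
      obtain ⟨y, hy1, hy2⟩ := hchain m (by omega)
      have := ih (by omega)
      rw [this, ← closure_conj_eq θ hc hinv (h m) hy1,
        closure_conj_eq θ hc hinv (h (m + 1)) hy2]
  exact key N le_rfl
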